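/- For any analytic map Ψ: U → ℝ^p on an open set U ⊆ ℝ^m with V = Ψ⁻¹(0), the Milnor set of the sphere-valued map satisfies M(Ψ/‖Ψ‖) ⊆ M(Ψ) \ V, where M(Ψ) is the set of non-transversality between the Euclidean distance function ρ and Ψ, and M(Ψ/‖Ψ‖) is the analogous set for Ψ/‖Ψ‖: U \ V → S^{p−1}. -/

import Mathlib

open RealInnerProductSpace


/-- For an analytic map `Ψ : U → ℝ^p` on an open set `U ⊆ ℝ^m` with
`V = Ψ⁻¹(0)`, the Milnor set of the sphere-valued map satisfies
`M(Ψ/‖Ψ‖) ⊆ M(Ψ) \ V`. Here `x ∈ M(Ψ)` iff the derivative of `Ψ` restricted to the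
tangent space of the sphere through `x` is not surjective onto `ℝ^p`, and
`x ∈ M(Ψ/‖Ψ‖)` iff `Ψ x ≠ 0` and the derivative of `Ψ/‖Ψ‖` restricted to the tangent
space of the sphere through `x` does not cover the tangent space of `S^{p−1}`. -/
theorem milnor_set_sphere_map_subset_milnor_set
    (m p : ℕ) (U : Set (EuclideanSpace ℝ (Fin m))) (hU : IsOpen U)
    (Ψ : EuclideanSpace ℝ (Fin m) → EuclideanSpace ℝ (Fin p))
    (hΨ : AnalyticOnNhd ℝ Ψ U) :
    {x ∈ U | Ψ x ≠ 0 ∧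
      ¬ ((Submodule.span ℝ {‖Ψ x‖⁻¹ • Ψ x})ᗮ ≤
          Submodule.map (fderiv ℝ (fun y => ‖Ψ y‖⁻¹ • Ψ y) x).toLinearMap
            (Submodule.span ℝ {x})ᗮ)} ⊆
    ({x ∈ U | ¬ (⊤ ≤ Submodule.map (fderiv ℝ Ψ x).toLinearMap (Submodule.span ℝ {x})ᗮ)} \
      {x | Ψ x = 0}) := by
  rintro x ⟨hxU, hΨx, hne⟩
  refine ⟨⟨hxU, fun hsurj => hne ?_⟩, hΨx⟩
  -- Ψ is differentiable at x
  have hΨd : DifferentiableAt ℝ Ψ x := (hΨ x hxU).differentiableAt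
  set D := fderiv ℝ Ψ x with hD
  have hnx : ‖Ψ x‖ ≠ 0 := norm_ne_zero_iff.mpr hΨx
  -- differentiability of the scalar factor
  have hnormd : DifferentiableAt ℝ (fun y => ‖Ψ y‖) x := hΨd.norm ℝ hΨx
  have hcd : DifferentiableAt ℝ (fun y => ‖Ψ y‖⁻¹) x := hnormd.inv hnx
  intro w hw
  -- w is orthogonal to Ψ x
  have hwu : (inner ℝ (‖Ψ x‖⁻¹ • Ψ x) w : ℝ) = 0 :=
    Submodule.mem_orthogonal_singleton_iff_inner_right.mp hw
  have hwperp : (inner ℝ (Ψ x) w : ℝ) = 0 := by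
    rw [real_inner_smul_left] at hwu
    rcases mul_eq_zero.mp hwu with h | h
    · exact absurd h (inv_ne_zero hnx)
    · exact h
  -- find a preimage of ‖Ψ x‖ • w under D inside the tangent space
  obtain ⟨z, hz, hzeq⟩ := hsurj (Submodule.mem_top (x := (‖Ψ x‖ • w : EuclideanSpace ℝ (Fin p))))
  have hzeq' : D z = ‖Ψ x‖ • w := hzeq
  -- Ψ x is orthogonal to D z
  have hDzperp : (inner ℝ (Ψ x) (D z) : ℝ) = 0 := by
    rw [hzeq', real_inner_smul_right, hwperp, mul_zero]
  -- the derivative of the scalar factor vanishes in direction z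
  have hscal : fderiv ℝ (fun y => ‖Ψ y‖⁻¹) x z = 0 := by
    have hgd : DifferentiableAt ℝ (fun y => (inner ℝ (Ψ y) (Ψ y) : ℝ)) x := hΨd.inner ℝ hΨd
    have hginner : fderiv ℝ (fun y => (inner ℝ (Ψ y) (Ψ y) : ℝ)) x z = 0 := by
      rw [fderiv_inner_apply ℝ hΨd hΨd z, hDzperp, real_inner_comm, hDzperp, add_zero]
    have hgpos : (0 : ℝ) < (inner ℝ (Ψ x) (Ψ x) : ℝ) := by
      rw [real_inner_self_eq_norm_mul_norm]
      have := norm_pos_iff.mpr hΨx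
      positivity
    have hhd : DifferentiableAt ℝ (fun t : ℝ => (Real.sqrt t)⁻¹) ((inner ℝ (Ψ x) (Ψ x) : ℝ)) := by
      exact (differentiableAt_id.sqrt hgpos.ne').inv
        (Real.sqrt_ne_zero'.mpr hgpos)
    have hcomp : (fun y => ‖Ψ y‖⁻¹) =
        (fun t : ℝ => (Real.sqrt t)⁻¹) ∘ (fun y => (inner ℝ (Ψ y) (Ψ y) : ℝ)) := by
      funext y
      rw [Function.comp_apply, real_inner_self_eq_norm_sq, Real.sqrt_sq (norm_nonneg (Ψ y))]
    rw [hcomp, fderiv_comp x hhd hgd]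
    rw [ContinuousLinearMap.comp_apply, hginner, map_zero]
  -- now compute the derivative of the normalized map in direction z
  refine ⟨z, hz, ?_⟩
  have hfd : fderiv ℝ (fun y => ‖Ψ y‖⁻¹ • Ψ y) x =
      ‖Ψ x‖⁻¹ • D + (fderiv ℝ (fun y => ‖Ψ y‖⁻¹) x).smulRight (Ψ x) :=
    fderiv_smul hcd hΨd
  show fderiv ℝ (fun y => ‖Ψ y‖⁻¹ • Ψ y) x z = w
  rw [hfd]
  simp only [ContinuousLinearMap.add_apply, ContinuousLinearMap.smul_apply,
    ContinuousLinearMap.smulRight_apply, hscal, zero_smul, add_zero, hzeq']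
  rw [smul_smul, inv_mul_cancel₀ hnx, one_smul]
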